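/- (Projective triple spread formula) Suppose U, V, W, Z are nonzero vectors that are linearly dependent (so the projective points [U], [V], [W], [Z] are coplanar), with a_Z ≠ 0 and with a_U·a_Z − b_{UZ}², a_V·a_Z − b_{VZ}², a_W·a_Z − b_{WZ}² all nonzero. Let R_u = S(ZV, ZW), R_v = S(ZU, ZW), R_w = S(ZU, ZV) be the projective spreads at Z. Then (R_u + R_v + R_w)² = 2(R_u² + R_v² + R_w²) + 4·R_u·R_v·R_w. -/

import Mathlib

/-- The projective quadrance between the projective points `[U]` and `[V]`. -/
def projQuadrance {F : Type*} [Field F] {M : Type*} [AddCommGroup M] [Module F M]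
    (B : LinearMap.BilinForm F M) (U V : M) : F :=
  1 - (B U V) ^ 2 / (B U U * B V V)

/-- The projective spread between the projective lines `WU` and `WV`
(the spread at the vertex `[W]`). -/
def projSpread {F : Type*} [Field F] {M : Type*} [AddCommGroup M] [Module F M]
    (B : LinearMap.BilinForm F M) (W U V : M) : F :=
  1 - (B W W * B U V - B U W * B V W) ^ 2 /
      ((B U U * B W W - (B U W) ^ 2) * (B V V * B W W - (B V W) ^ 2))

/-- Scalar triple quad formula: follows from vanishing of the Gram determinant. -/
theorem triple_quad_scalar {F : Type*} [Field F] (x y z p q r : F)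
    (hx : x ≠ 0) (hy : y ≠ 0) (hz : z ≠ 0)
    (hD : x*y*z + 2*p*q*r - x*p^2 - y*q^2 - z*r^2 = 0) :
    ((1 - p^2/(y*z)) + (1 - q^2/(x*z)) + (1 - r^2/(x*y)))^2 =
      2*((1 - p^2/(y*z))^2 + (1 - q^2/(x*z))^2 + (1 - r^2/(x*y))^2) +
      4*(1 - p^2/(y*z))*(1 - q^2/(x*z))*(1 - r^2/(x*y)) := by
  field_simp
  linear_combination
    ((4*p*q*r - (x*y*z + 2*p*q*r - x*p^2 - y*q^2 - z*r^2))) * hD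

theorem projective_triple_spread_formula
    {F : Type*} [Field F] (hchar : (2 : F) ≠ 0)
    {M : Type*} [AddCommGroup M] [Module F M]
    (B : LinearMap.BilinForm F M) (hsym : ∀ x y : M, B x y = B y x)
    (U V W Z : M) (hU : U ≠ 0) (hV : V ≠ 0) (hW : W ≠ 0) (hZ : Z ≠ 0)
    (hdep : ∃ a b c d : F, (a ≠ 0 ∨ b ≠ 0 ∨ c ≠ 0 ∨ d ≠ 0) ∧
      a • U + b • V + c • W + d • Z = 0)
    (haZ : B Z Z ≠ 0)
    (hdUZ : B U U * B Z Z - (B U Z) ^ 2 ≠ 0)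
    (hdVZ : B V V * B Z Z - (B V Z) ^ 2 ≠ 0)
    (hdWZ : B W W * B Z Z - (B W Z) ^ 2 ≠ 0) :
    (projSpread B Z V W + projSpread B Z U W + projSpread B Z U V) ^ 2 =
      2 * (projSpread B Z V W ^ 2 + projSpread B Z U W ^ 2 + projSpread B Z U V ^ 2) +
        4 * projSpread B Z V W * projSpread B Z U W * projSpread B Z U V := by
  obtain ⟨a, b, c, d, hne, hrel⟩ := hdep
  -- orthogonal projections away from Z
  set u : M := B Z Z • U - B U Z • Z with hu_def
  set v : M := B Z Z • V - B V Z • Z with hv_def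
  set w : M := B Z Z • W - B W Z • Z with hw_def
  have expand : ∀ (X Y : M) (s t : F),
      B (B Z Z • X - s • Z) (B Z Z • Y - t • Z)
        = B Z Z * (B Z Z * B X Y) - B Z Z * (t * B X Z) - s * (B Z Z * B Z Y)
          + s * (t * B Z Z) := by
    intro X Y s t
    simp only [map_sub, map_smul, LinearMap.sub_apply, LinearMap.smul_apply, smul_eq_mul]
    ring
  have hxx : B u u = B Z Z * (B U U * B Z Z - (B U Z)^2) := by
    rw [hu_def, expand U U (B U Z) (B U Z), hsym Z U]; ring
  have hyy : B v v = B Z Z * (B V V * B Z Z - (B V Z)^2) := by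
    rw [hv_def, expand V V (B V Z) (B V Z), hsym Z V]; ring
  have hzz : B w w = B Z Z * (B W W * B Z Z - (B W Z)^2) := by
    rw [hw_def, expand W W (B W Z) (B W Z), hsym Z W]; ring
  have hpp : B v w = B Z Z * (B Z Z * B V W - B V Z * B W Z) := by
    rw [hv_def, hw_def, expand V W (B V Z) (B W Z), hsym Z W]; ring
  have hqq : B u w = B Z Z * (B Z Z * B U W - B U Z * B W Z) := by
    rw [hu_def, hw_def, expand U W (B U Z) (B W Z), hsym Z W]; ring
  have hrr : B u v = B Z Z * (B Z Z * B U V - B U Z * B V Z) := by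
    rw [hu_def, hv_def, expand U V (B U Z) (B V Z), hsym Z V]; ring
  have hx : B u u ≠ 0 := by rw [hxx]; exact mul_ne_zero haZ hdUZ
  have hy : B v v ≠ 0 := by rw [hyy]; exact mul_ne_zero haZ hdVZ
  have hz : B w w ≠ 0 := by rw [hzz]; exact mul_ne_zero haZ hdWZ
  -- B Z annihilates u, v, w
  have hZu : B Z u = 0 := by
    rw [hu_def]; simp only [map_sub, map_smul, smul_eq_mul]
    rw [hsym Z U]; ring
  have hZv : B Z v = 0 := by
    rw [hv_def]; simp only [map_sub, map_smul, smul_eq_mul]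
    rw [hsym Z V]; ring
  have hZw : B Z w = 0 := by
    rw [hw_def]; simp only [map_sub, map_smul, smul_eq_mul]
    rw [hsym Z W]; ring
  -- linear dependence of u, v, w up to Z
  have hsum : a • u + b • v + c • w
      = (-(d * B Z Z) - a * B U Z - b * B V Z - c * B W Z) • Z := by
    rw [hu_def, hv_def, hw_def]
    have h0 : (B Z Z : F) • (a • U + b • V + c • W + d • Z) = (0 : M) := by
      rw [hrel, smul_zero]
    linear_combination (norm := module) h0
  -- Gram relations
  have key : ∀ t : M, B Z t = 0 → a * B u t + b * B v t + c * B w t = 0 := by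
    intro t ht
    have h := congrArg (fun m => B m t) hsum
    simp only [map_add, map_smul, LinearMap.add_apply, LinearMap.smul_apply,
      smul_eq_mul] at h
    rw [ht, mul_zero] at h
    exact h
  have E1 := key u hZu
  rw [hsym v u, hsym w u] at E1
  have E2 := key v hZv
  rw [hsym w v] at E2
  have E3 := key w hZw
  -- at least one of a, b, c is nonzero
  have habc : a ≠ 0 ∨ b ≠ 0 ∨ c ≠ 0 := by
    by_contra h
    push_neg at h
    obtain ⟨ha, hb, hc⟩ := h
    have hd : d ≠ 0 := by
      rcases hne with h' | h' | h' | h'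
      exacts [absurd ha h', absurd hb h', absurd hc h', h']
    rw [ha, hb, hc] at hrel
    simp only [zero_smul, zero_add] at hrel
    exact hZ (by simpa [hd] using smul_eq_zero.mp hrel)
  -- Gram determinant vanishes
  have hD : B u u * B v v * B w w + 2 * B v w * B u w * B u v
      - B u u * (B v w)^2 - B v v * (B u w)^2 - B w w * (B u v)^2 = 0 := by
    rcases habc with ha | hb | hc
    · refine (mul_eq_zero.mp ?_).resolve_left ha
      linear_combination (B v v * B w w - (B v w)^2) * E1
        + (B v w * B u w - B u v * B w w) * E2
        + (B u v * B v w - B u w * B v v) * E3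
    · refine (mul_eq_zero.mp ?_).resolve_left hb
      linear_combination (B v w * B u w - B u v * B w w) * E1
        + (B u u * B w w - (B u w)^2) * E2
        + (B u w * B u v - B v w * B u u) * E3
    · refine (mul_eq_zero.mp ?_).resolve_left hc
      linear_combination (B u v * B v w - B u w * B v v) * E1
        + (B u w * B u v - B v w * B u u) * E2
        + (B u u * B v v - (B u v)^2) * E3
  -- rewrite the spreads as quadrances of the projections
  have cancel : ∀ A C E : F, C ≠ 0 → E ≠ 0 →
      (B Z Z * A)^2 / ((B Z Z * C) * (B Z Z * E)) = A^2 / (C * E) := by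
    intro A C E hC hE
    rw [mul_pow]
    field_simp
  have hS1 : projSpread B Z V W = 1 - (B v w)^2 / (B v v * B w w) := by
    unfold projSpread
    rw [hpp, hyy, hzz, cancel _ _ _ hdVZ hdWZ]
  have hS2 : projSpread B Z U W = 1 - (B u w)^2 / (B u u * B w w) := by
    unfold projSpread
    rw [hqq, hxx, hzz, cancel _ _ _ hdUZ hdWZ]
  have hS3 : projSpread B Z U V = 1 - (B u v)^2 / (B u u * B v v) := by
    unfold projSpread
    rw [hrr, hxx, hyy, cancel _ _ _ hdUZ hdVZ]
  rw [hS1, hS2, hS3]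
  have := triple_quad_scalar (B u u) (B v v) (B w w) (B v w) (B u w) (B u v)
    hx hy hz (by linear_combination hD)
  linear_combination this
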